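/- Polynomial dependence on t of the normalized PBW representative (the key computation in the proof of the paper's Lemma 6.4): for every u ∈ U(g) there exist finitely many elements w₀,…,w_m ∈ M such that for every t ∈ K, u − Σ_{k=0}^m t^k·w_k ∈ I_t. In other words, the unique representative in M of the class of u modulo I_t depends polynomially on t. -/

import Mathlib

noncomputable section
open UniversalEnvelopingAlgebra

def It {g : Type*} [LieRing g] [LieAlgebra ℝ g] (h : LieSubalgebra ℝ g)
    (lam : h →ₗ[ℝ] ℝ) (t : ℝ) : Ideal (UniversalEnvelopingAlgebra ℝ g) :=
  Ideal.span {x | ∃ H : h, x = ι ℝ (H : g) + (t * lam H) • 1}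

def Mspan {g : Type*} [LieRing g] [LieAlgebra ℝ g] {q : Submodule ℝ g} {p : ℕ}
    (Q : Module.Basis (Fin p) ℝ q) : Submodule ℝ (UniversalEnvelopingAlgebra ℝ g) :=
  Submodule.span ℝ {u | ∃ α : Fin p → ℕ,
    u = (List.ofFn fun i => (ι ℝ ((Q i : q) : g)) ^ α i).prod}

attribute [local instance] LieRing.ofAssociativeRing

section Aux
variable {g : Type*} [LieRing g] [LieAlgebra ℝ g]
variable (h : LieSubalgebra ℝ g) (lam : h →ₗ[ℝ] ℝ)
variable {q : Submodule ℝ g} {p : ℕ} (Q : Module.Basis (Fin p) ℝ q)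

/-- products of `ι`'s over a list -/
def prodg (xs : List g) : UniversalEnvelopingAlgebra ℝ g :=
  (xs.map (fun x => ι ℝ x)).prod

@[simp] lemma prodg_nil : prodg ([] : List g) = 1 := rfl
@[simp] lemma prodg_cons (x : g) (xs : List g) : prodg (x :: xs) = ι ℝ x * prodg xs := by
  simp [prodg]
lemma prodg_append (xs ys : List g) : prodg (xs ++ ys) = prodg xs * prodg ys := by
  simp [prodg]

/-- polynomial-family predicate -/
def PF (f : ℝ → UniversalEnvelopingAlgebra ℝ g) : Prop :=
  ∃ (m : ℕ) (w : ℕ → UniversalEnvelopingAlgebra ℝ g),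
    (∀ k, w k ∈ Mspan Q) ∧
    ∀ t : ℝ, f t - (∑ k ∈ Finset.range (m + 1), t ^ k • w k) ∈ It h lam t

lemma pf_congr {f f' : ℝ → UniversalEnvelopingAlgebra ℝ g} (hf : PF h lam Q f)
    (e : ∀ t, f t = f' t) : PF h lam Q f' := by
  obtain ⟨m, w, hw, hm⟩ := hf
  exact ⟨m, w, hw, fun t => by rw [← e t]; exact hm t⟩

lemma pf_of_mem {f : ℝ → UniversalEnvelopingAlgebra ℝ g}
    (hf : ∀ t, f t ∈ It h lam t) : PF h lam Q f := by
  refine ⟨0, fun _ => 0, fun k => Submodule.zero_mem _, fun t => ?_⟩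
  simpa using hf t


lemma sum_extend {w : ℕ → UniversalEnvelopingAlgebra ℝ g} {m N : ℕ}
    (hz : ∀ k, m < k → w k = 0) (hmN : m ≤ N) (t : ℝ) :
    (∑ k ∈ Finset.range (N + 1), t ^ k • w k) = ∑ k ∈ Finset.range (m + 1), t ^ k • w k := by
  refine (Finset.sum_subset (Finset.range_subset_range.2 (by omega)) (fun k hk hk' => ?_)).symm
  simp only [Finset.mem_range] at hk hk'
  rw [hz k (by omega), smul_zero]

lemma pf_pad {f : ℝ → UniversalEnvelopingAlgebra ℝ g} (hf : PF h lam Q f) :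
    ∃ (m : ℕ) (w : ℕ → UniversalEnvelopingAlgebra ℝ g), (∀ k, w k ∈ Mspan Q) ∧
      (∀ k, m < k → w k = 0) ∧
      ∀ t : ℝ, f t - (∑ k ∈ Finset.range (m + 1), t ^ k • w k) ∈ It h lam t := by
  obtain ⟨m, w, hw, hm⟩ := hf
  refine ⟨m, fun k => if k ≤ m then w k else 0,
    fun k => by dsimp only; split <;> simp [hw], fun k hk => if_neg (by omega), fun t => ?_⟩
  have : (∑ k ∈ Finset.range (m + 1), t ^ k • if k ≤ m then w k else 0)
      = ∑ k ∈ Finset.range (m + 1), t ^ k • w k :=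
    Finset.sum_congr rfl (fun k hk => by
      rw [if_pos (Nat.lt_succ_iff.mp (Finset.mem_range.mp hk))])
  rw [this]; exact hm t

lemma pf_add {f f' : ℝ → UniversalEnvelopingAlgebra ℝ g} (hf : PF h lam Q f)
    (hf' : PF h lam Q f') : PF h lam Q (fun t => f t + f' t) := by
  obtain ⟨m, w, hw, hz, hm⟩ := pf_pad h lam Q hf
  obtain ⟨m', w', hw', hz', hm'⟩ := pf_pad h lam Q hf'
  refine ⟨max m m', fun k => w k + w' k, fun k => Submodule.add_mem _ (hw k) (hw' k), fun t => ?_⟩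
  have : (∑ k ∈ Finset.range (max m m' + 1), t ^ k • (w k + w' k))
      = (∑ k ∈ Finset.range (m + 1), t ^ k • w k)
        + ∑ k ∈ Finset.range (m' + 1), t ^ k • w' k := by
    rw [← sum_extend (N := max m m') hz (le_max_left _ _) t,
      ← sum_extend (N := max m m') hz' (le_max_right _ _) t, ← Finset.sum_add_distrib]
    exact Finset.sum_congr rfl (fun k _ => smul_add _ _ _)
  rw [this]
  have := Submodule.add_mem _ (hm t) (hm' t)
  convert this using 1
  exact add_sub_add_comm _ _ _ _

lemma pf_smul {f : ℝ → UniversalEnvelopingAlgebra ℝ g} (c : ℝ) (hf : PF h lam Q f) :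
    PF h lam Q (fun t => c • f t) := by
  obtain ⟨m, w, hw, hm⟩ := hf
  refine ⟨m, fun k => c • w k, fun k => Submodule.smul_mem _ _ (hw k), fun t => ?_⟩
  have : (∑ k ∈ Finset.range (m + 1), t ^ k • c • w k)
      = c • ∑ k ∈ Finset.range (m + 1), t ^ k • w k := by
    rw [Finset.smul_sum]; exact Finset.sum_congr rfl (fun k _ => smul_comm _ _ _)
  rw [this, ← smul_sub]
  exact Submodule.smul_of_tower_mem _ _ (hm t)

lemma pf_tshift {f : ℝ → UniversalEnvelopingAlgebra ℝ g} (hf : PF h lam Q f) :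
    PF h lam Q (fun t => t • f t) := by
  obtain ⟨m, w, hw, hm⟩ := hf
  refine ⟨m + 1, fun k => Nat.rec 0 (fun k _ => w k) k,
    fun k => by cases k <;> simp [hw, Submodule.zero_mem], fun t => ?_⟩
  have : (∑ k ∈ Finset.range (m + 1 + 1), t ^ k • (Nat.rec 0 (fun k _ => w k) k
      : UniversalEnvelopingAlgebra ℝ g))
      = t • ∑ k ∈ Finset.range (m + 1), t ^ k • w k := by
    rw [Finset.sum_range_succ', Finset.smul_sum]
    simp [pow_succ, mul_comm, mul_smul]
  rw [this, ← smul_sub]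
  exact Submodule.smul_of_tower_mem _ _ (hm t)

lemma pf_zero : PF h lam Q (fun _ => (0 : UniversalEnvelopingAlgebra ℝ g)) :=
  pf_of_mem h lam Q (fun t => Submodule.zero_mem _)

lemma pf_sum {s : Finset ℕ} {f : ℕ → ℝ → UniversalEnvelopingAlgebra ℝ g}
    (hf : ∀ j ∈ s, PF h lam Q (f j)) : PF h lam Q (fun t => ∑ j ∈ s, f j t) := by
  classical
  induction s using Finset.induction with
  | empty => simpa using pf_zero h lam Q
  | insert a s hj ih =>
    have := pf_add h lam Q (hf a (Finset.mem_insert_self a s))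
      (ih (fun j hjs => hf j (Finset.mem_insert_of_mem hjs)))
    exact pf_congr h lam Q this (fun t => by rw [Finset.sum_insert hj])

lemma p_of_mem {u : UniversalEnvelopingAlgebra ℝ g} (hu : u ∈ Mspan Q) :
    PF h lam Q (fun _ => u) := by
  refine ⟨0, fun k => Nat.rec u (fun _ _ => 0) k, fun k => by cases k <;> simp [hu, Submodule.zero_mem],
    fun t => ?_⟩
  simp


lemma It_gen_mem (t : ℝ) (H : h) : ι ℝ (H : g) + (t * lam H) • 1 ∈ It h lam t :=
  Ideal.subset_span ⟨H, rfl⟩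

lemma It_mul_mem {t : ℝ} (v : UniversalEnvelopingAlgebra ℝ g)
    {x : UniversalEnvelopingAlgebra ℝ g} (hx : x ∈ It h lam t) : v * x ∈ It h lam t := by
  simpa [smul_eq_mul] using (It h lam t).smul_mem v hx

lemma p_mul_H {v : UniversalEnvelopingAlgebra ℝ g} (hv : PF h lam Q (fun _ => v)) (H : h) :
    PF h lam Q (fun _ => v * ι ℝ (H : g)) := by
  have h1 : PF h lam Q (fun t => v * (ι ℝ (H : g) + (t * lam H) • 1)) :=
    pf_of_mem h lam Q (fun t => It_mul_mem h lam v (It_gen_mem h lam t H))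
  have h2 : PF h lam Q (fun t => (-(lam H)) • (t • v)) :=
    pf_smul h lam Q _ (pf_tshift h lam Q hv)
  refine pf_congr h lam Q (pf_add h lam Q h1 h2) (fun t => ?_)
  rw [mul_add, mul_smul_comm, mul_one, neg_smul, smul_smul, mul_comm (lam H) t]
  abel

lemma ι_mul_ι (x y : g) :
    (ι ℝ x : UniversalEnvelopingAlgebra ℝ g) * ι ℝ y = ι ℝ y * ι ℝ x + ι ℝ ⁅x, y⁆ := by
  have := (ι ℝ (L := g)).map_lie (x := x) (y := y)
  rw [Ring.lie_def] at this
  rw [this]; abel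

lemma comm_lemma (x : g) (xs : List g) :
    ι ℝ x * prodg xs = prodg xs * ι ℝ x
      + ∑ j ∈ Finset.range xs.length, prodg (xs.set j ⁅x, xs.getD j 0⁆) := by
  induction xs with
  | nil => simp
  | cons a l ih =>
    have e1 : ι ℝ x * prodg (a :: l) = ι ℝ a * (ι ℝ x * prodg l) + ι ℝ ⁅x, a⁆ * prodg l := by
      rw [prodg_cons, ← mul_assoc, ι_mul_ι x a, add_mul, mul_assoc]
    rw [e1, ih]
    rw [List.length_cons, Finset.sum_range_succ']
    simp only [List.set_cons_succ, List.getD_cons_succ, List.set_cons_zero, List.getD_cons_zero,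
      prodg_cons]
    rw [mul_add, Finset.mul_sum, ← mul_assoc]
    abel


end Aux

section Lists
variable {p : ℕ}

def invCount : List (Fin p) → ℕ
  | [] => 0
  | a :: l => l.countP (fun b => decide (b < a)) + invCount l

lemma invCount_cons (a : Fin p) (l : List (Fin p)) :
    invCount (a :: l) = l.countP (fun b => decide (b < a)) + invCount l := rfl

lemma countP_cons_cons_swap (f : Fin p → Bool) (i j : Fin p) (B : List (Fin p)) :
    (i :: j :: B).countP f = (j :: i :: B).countP f := by
  rw [List.countP_cons, List.countP_cons, List.countP_cons, List.countP_cons]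
  omega

lemma invCount_swap (A : List (Fin p)) (i j : Fin p) (hji : j < i) (B : List (Fin p)) :
    invCount (A ++ j :: i :: B) + 1 = invCount (A ++ i :: j :: B) := by
  induction A with
  | nil =>
    simp only [List.nil_append, invCount_cons, List.countP_cons]
    have h1 : decide (j < i) = true := by simpa using hji
    have h2 : decide (i < j) = false := by simp [not_lt_of_gt hji]
    simp [h1, h2]
    omega
  | cons a A ih =>
    simp only [List.cons_append, invCount_cons]
    rw [List.countP_append, List.countP_append, countP_cons_cons_swap]
    omega

lemma chain'_or_swap (L : List (Fin p)) : List.Chain' (· ≤ ·) L ∨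
    ∃ (A : List (Fin p)) (i j : Fin p) (B : List (Fin p)), L = A ++ i :: j :: B ∧ j < i := by
  induction L with
  | nil => left; exact List.isChain_nil
  | cons a L ih =>
    cases L with
    | nil => left; exact List.isChain_singleton _
    | cons b L' =>
      rcases le_or_gt a b with hab | hba
      · rcases ih with hc | ⟨A, i, j, B, hE, hji⟩
        · left; exact List.isChain_cons_cons.mpr ⟨hab, hc⟩
        · right; exact ⟨a :: A, i, j, B, by rw [List.cons_append, ← hE], hji⟩
      · right; exact ⟨[], a, b, L', rfl, hba⟩

lemma count_flatMap_replicate (α : Fin p → ℕ) (a : Fin p) :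
    ∀ l : List (Fin p), l.Nodup →
      ((l.flatMap fun i => List.replicate (α i) i).count a) = if a ∈ l then α a else 0 := by
  intro l
  induction l with
  | nil => simp
  | cons b l ih =>
    intro hnd
    rw [List.flatMap_cons, List.count_append, List.count_replicate,
      ih (List.Nodup.of_cons hnd)]
    by_cases hab : a = b
    · subst hab
      have : a ∉ l := (List.nodup_cons.mp hnd).1
      simp [this]
    · simp [hab, Ne.symm hab, List.mem_cons]

lemma pairwise_flatMap_replicate (α : Fin p → ℕ) :
    ∀ l : List (Fin p), l.Pairwise (· ≤ ·) →
      (l.flatMap fun i => List.replicate (α i) i).Pairwise (· ≤ ·) := by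
  intro l
  induction l with
  | nil => simp
  | cons b l ih =>
    intro hp
    rw [List.flatMap_cons, List.pairwise_append]
    refine ⟨List.pairwise_replicate.mpr (Or.inr le_rfl), ih (List.Pairwise.of_cons hp), ?_⟩
    intro x hx y hy
    rw [List.eq_of_mem_replicate hx]
    obtain ⟨c, hc, hy'⟩ := List.mem_flatMap.mp hy
    rw [List.eq_of_mem_replicate hy']
    exact (List.pairwise_cons.mp hp).1 c hc

lemma sorted_eq_mList {L : List (Fin p)} (hL : L.Pairwise (· ≤ ·)) :
    L = (List.finRange p).flatMap fun i => List.replicate (L.count i) i := by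
  refine List.Perm.eq_of_pairwise' hL
    (pairwise_flatMap_replicate _ _ ((List.pairwise_lt_finRange p).imp le_of_lt)) ?_
  refine List.perm_iff_count.mpr (fun a => ?_)
  rw [count_flatMap_replicate _ _ _ (List.nodup_finRange p)]
  simp [List.mem_finRange]

end Lists

section Aux2
variable {g : Type*} [LieRing g] [LieAlgebra ℝ g]
variable (h : LieSubalgebra ℝ g) (lam : h →ₗ[ℝ] ℝ)
variable {q : Submodule ℝ g} {p : ℕ} (Q : Module.Basis (Fin p) ℝ q)

/-- product of `ι(Q i)`'s over a list of indices -/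
def prodQ (L : List (Fin p)) : UniversalEnvelopingAlgebra ℝ g :=
  prodg (L.map fun i => ((Q i : q) : g))

@[simp] lemma prodQ_nil : prodQ Q ([] : List (Fin p)) = 1 := rfl
@[simp] lemma prodQ_cons (i : Fin p) (L : List (Fin p)) :
    prodQ Q (i :: L) = ι ℝ ((Q i : q) : g) * prodQ Q L := by simp [prodQ]
lemma prodQ_append (L L' : List (Fin p)) :
    prodQ Q (L ++ L') = prodQ Q L * prodQ Q L' := by
  simp [prodQ, prodg_append]

lemma prodQ_flatMap (α : Fin p → ℕ) (l : List (Fin p)) :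
    prodQ Q (l.flatMap fun i => List.replicate (α i) i)
      = (l.map fun i => (ι ℝ ((Q i : q) : g) : UniversalEnvelopingAlgebra ℝ g) ^ α i).prod := by
  induction l with
  | nil => rfl
  | cons a l ih =>
    rw [List.flatMap_cons, prodQ_append, ih, List.map_cons, List.prod_cons]
    congr 1
    simp [prodQ, prodg, List.map_replicate, List.prod_replicate]

lemma sorted_prodQ_mem_Mspan {L : List (Fin p)} (hL : L.Pairwise (· ≤ ·)) :
    prodQ Q L ∈ Mspan Q := by
  have h2 := prodQ_flatMap Q (fun i => L.count i) (List.finRange p)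
  rw [← sorted_eq_mList hL] at h2
  rw [h2, ← List.ofFn_eq_map]
  exact Submodule.subset_span ⟨_, rfl⟩

end Aux2

section Main
variable {g : Type*} [LieRing g] [LieAlgebra ℝ g]
variable (h : LieSubalgebra ℝ g) (lam : h →ₗ[ℝ] ℝ)
variable {q : Submodule ℝ g} {p : ℕ} (Q : Module.Basis (Fin p) ℝ q)

lemma mul_mem_span_prodQ (y : q) (m : ℕ) {v : UniversalEnvelopingAlgebra ℝ g}
    (hv : v ∈ Submodule.span ℝ {u | ∃ L : List (Fin p), L.length = m ∧ u = prodQ Q L}) :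
    ι ℝ (y : g) * v ∈
      Submodule.span ℝ {u | ∃ L : List (Fin p), L.length = m + 1 ∧ u = prodQ Q L} := by
  induction hv using Submodule.span_induction with
  | mem u hu =>
    obtain ⟨L, hL, rfl⟩ := hu
    have hy : ((y : q) : g) = ∑ i, Q.repr y i • ((Q i : q) : g) := by
      conv_lhs => rw [← Q.sum_repr y]
      simp only [Submodule.coe_sum, Submodule.coe_smul]
    have hsum : ι ℝ ((y : q) : g)
        = ∑ i, Q.repr y i • (ι ℝ ((Q i : q) : g) : UniversalEnvelopingAlgebra ℝ g) := by
      rw [hy, ← LieHom.coe_toLinearMap, map_sum]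
      simp
    rw [hsum, Finset.sum_mul]
    refine Submodule.sum_mem _ (fun i _ => ?_)
    rw [smul_mul_assoc]
    refine Submodule.smul_mem _ _ (Submodule.subset_span ⟨i :: L, by simp [hL], ?_⟩)
    rw [prodQ_cons]
  | zero => rw [mul_zero]; exact Submodule.zero_mem _
  | add x y _ _ hx hy => rw [mul_add]; exact Submodule.add_mem _ hx hy
  | smul c x _ hx => rw [mul_smul_comm]; exact Submodule.smul_mem _ _ hx

lemma prodq_mem_span (ys : List q) :
    prodg (ys.map (fun (y : ↥q) => (y : g))) ∈
      Submodule.span ℝ {u | ∃ L : List (Fin p), L.length = ys.length ∧ u = prodQ Q L} := by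
  induction ys with
  | nil => exact Submodule.subset_span ⟨[], rfl, rfl⟩
  | cons y ys ih =>
    rw [List.map_cons, prodg_cons]
    exact mul_mem_span_prodQ Q y _ ih

lemma pf_prodg (hq : IsCompl h.toSubmodule q) :
    ∀ (n : ℕ) (xs : List g), xs.length = n → PF h lam Q (fun _ => prodg xs) := by
  intro n
  induction n using Nat.strong_induction_on with
  | _ n IH =>
  -- Step 1: straightening of index lists, by induction on the inversion count.
  have straight : ∀ (k : ℕ) (L : List (Fin p)), L.length = n → invCount L ≤ k →
      PF h lam Q (fun _ => prodQ Q L) := by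
    intro k
    induction k with
    | zero =>
      intro L hlen hinv
      rcases chain'_or_swap L with hs | ⟨A, i, j, B, rfl, hji⟩
      · exact p_of_mem h lam Q (sorted_prodQ_mem_Mspan Q (List.isChain_iff_pairwise.mp hs))
      · exfalso
        have := invCount_swap A i j hji B
        omega
    | succ k ihk =>
      intro L hlen hinv
      rcases chain'_or_swap L with hs | ⟨A, i, j, B, rfl, hji⟩
      · exact p_of_mem h lam Q (sorted_prodQ_mem_Mspan Q (List.isChain_iff_pairwise.mp hs))
      · have hlen2 : (A ++ j :: i :: B).length = n := by
          simp only [List.length_append, List.length_cons] at hlen ⊢; omega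
        have hinv2 : invCount (A ++ j :: i :: B) ≤ k := by
          have := invCount_swap A i j hji B; omega
        have h1 := ihk (A ++ j :: i :: B) hlen2 hinv2
        have hbrlen : ((A.map fun a => ((Q a : q) : g))
            ++ ⁅((Q i : q) : g), ((Q j : q) : g)⁆ :: (B.map fun a => ((Q a : q) : g))).length
            = A.length + 1 + B.length := by
          simp only [List.length_append, List.length_map, List.length_cons]
          omega
        have hn1 : A.length + 1 + B.length < n := by
          simp only [List.length_append, List.length_cons] at hlen; omega
        have h2 := IH _ hn1 _ hbrlen
        refine pf_congr h lam Q (pf_add h lam Q h1 h2) (fun t => ?_)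
        have hbr : (ι ℝ ⁅((Q i : q) : g), ((Q j : q) : g)⁆ : UniversalEnvelopingAlgebra ℝ g)
            = ι ℝ ((Q i : q) : g) * ι ℝ ((Q j : q) : g)
              - ι ℝ ((Q j : q) : g) * ι ℝ ((Q i : q) : g) := by
          rw [(ι ℝ (L := g)).map_lie, Ring.lie_def]
        show prodQ Q (A ++ j :: i :: B) + prodg _ = prodQ Q (A ++ i :: j :: B)
        have hPA : prodg (List.map (fun a => ((Q a : q) : g)) A) = prodQ Q A := rfl
        have hPB : prodg (List.map (fun a => ((Q a : q) : g)) B) = prodQ Q B := rfl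
        rw [prodg_append, prodg_cons, prodQ_append, prodQ_append, prodQ_cons, prodQ_cons,
          prodQ_cons, prodQ_cons, hbr, hPA, hPB]
        noncomm_ring
  -- Step 2: products of coerced elements of q, of length n.
  have qcase : ∀ ys : List q, ys.length = n →
      PF h lam Q (fun _ => prodg (ys.map fun (y : ↥q) => (y : g))) := by
    intro ys hlen
    have hsp := prodq_mem_span Q ys
    rw [hlen] at hsp
    revert hsp
    generalize prodg (List.map (fun (y : ↥q) => (y : g)) ys) = v
    intro hsp
    induction hsp using Submodule.span_induction with
    | mem u hu =>
      obtain ⟨L, hL, rfl⟩ := hu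
      exact straight (invCount L) L hL le_rfl
    | zero => exact pf_zero h lam Q
    | add x y _ _ hx hy => exact pf_add h lam Q hx hy
    | smul c x _ hx => exact pf_smul h lam Q c hx
  -- Step 3: peel off the general factors one at a time, moving h-parts to the right.
  have main : ∀ (xs : List g) (ys : List q),
      ys.length + xs.length = n →
      PF h lam Q (fun _ => prodg ((ys.map fun (y : ↥q) => (y : g)) ++ xs)) := by
    intro xs
    induction xs with
    | nil =>
      intro ys hlen
      rw [List.append_nil]
      exact qcase ys (by simpa using hlen)
    | cons x xs ihxs =>
      intro ys hlen
      obtain ⟨H, y, hH, hy, hxy⟩ := Submodule.codisjoint_iff_exists_add_eq.mp hq.codisjoint x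
      have hlen' : ys.length + xs.length + 1 = n := by
        simp only [List.length_cons] at hlen; omega
      -- second summand: y absorbed into the q-prefix
      have h2 := ihxs (ys ++ [⟨y, hy⟩]) (by simp only [List.length_append]; simp; omega)
      -- first summand: ι H moved to the right
      have hA : PF h lam Q
          (fun _ => prodg ((ys.map fun (y : ↥q) => (y : g)) ++ xs) * ι ℝ ((⟨H, hH⟩ : h) : g)) := by
        refine p_mul_H h lam Q (IH (ys.length + xs.length) (by omega)
          ((ys.map fun (y : ↥q) => (y : g)) ++ xs) (by simp)) ⟨H, hH⟩
      have hB : PF h lam Q (fun _ => ∑ j ∈ Finset.range xs.length,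
          prodg ((ys.map fun (y : ↥q) => (y : g)) ++ xs.set j ⁅H, xs.getD j 0⁆)) := by
        refine pf_sum h lam Q (fun j hj => ?_)
        exact IH (ys.length + xs.length) (by omega) _ (by simp)
      have hfirst : PF h lam Q
          (fun _ => prodg (ys.map fun (y : ↥q) => (y : g)) * (ι ℝ H * prodg xs)) := by
        refine pf_congr h lam Q (pf_add h lam Q hA hB) (fun t => ?_)
        rw [comm_lemma H xs, mul_add, Finset.mul_sum]
        simp only [prodg_append]
        rw [mul_assoc]
      have := pf_add h lam Q hfirst h2
      refine pf_congr h lam Q this (fun t => ?_)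
      have e1 : prodg (List.map (fun (z : ↥q) => (z : g)) (ys ++ ([⟨y, hy⟩] : List q)) ++ xs)
          = prodg (List.map (fun (z : ↥q) => (z : g)) ys) * (ι ℝ y * prodg xs) := by
        simp only [List.map_append, List.map_cons, List.map_nil, List.append_assoc,
          List.cons_append, List.nil_append, prodg_append, prodg_cons]
      rw [e1, prodg_append, prodg_cons, ← hxy, map_add]
      noncomm_ring
  intro xs hlen
  have := main xs [] (by simpa using hlen)
  simpa using this

end Main

section Final
variable {g : Type*} [LieRing g] [LieAlgebra ℝ g]
variable (h : LieSubalgebra ℝ g) (lam : h →ₗ[ℝ] ℝ)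
variable {q : Submodule ℝ g} {p : ℕ} (Q : Module.Basis (Fin p) ℝ q)

lemma list_of_range {l : List (UniversalEnvelopingAlgebra ℝ g)}
    (hl : ∀ y ∈ l, y ∈ Set.range (⇑(ι ℝ : g →ₗ⁅ℝ⁆ UniversalEnvelopingAlgebra ℝ g))) :
    ∃ xs : List g, l = xs.map fun x => ι ℝ x := by
  induction l with
  | nil => exact ⟨[], rfl⟩
  | cons a l ih =>
    obtain ⟨x, hx⟩ := hl a List.mem_cons_self
    obtain ⟨xs, rfl⟩ := ih (fun y hy => hl y (List.mem_cons_of_mem a hy))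
    exact ⟨x :: xs, by rw [List.map_cons, hx]⟩

set_option synthInstance.maxHeartbeats 1000000 in
set_option maxHeartbeats 1000000 in
lemma mem_adjoin_range_ι (v : UniversalEnvelopingAlgebra ℝ g) :
    v ∈ Algebra.adjoin ℝ (Set.range (⇑(ι ℝ : g →ₗ⁅ℝ⁆ UniversalEnvelopingAlgebra ℝ g))) := by
  set S := Algebra.adjoin ℝ (Set.range (⇑(ι ℝ : g →ₗ⁅ℝ⁆ UniversalEnvelopingAlgebra ℝ g)))
  let f : g →ₗ⁅ℝ⁆ S :=
    { toFun := fun x => ⟨ι ℝ x, Algebra.subset_adjoin ⟨x, rfl⟩⟩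
      map_add' := fun x y => Subtype.ext (by simp)
      map_smul' := fun c x => Subtype.ext (by simp)
      map_lie' := by
        intro x y
        apply Subtype.ext
        show (ι ℝ ⁅x, y⁆ : UniversalEnvelopingAlgebra ℝ g) = ((⁅_, _⁆ : S) : _)
        rw [Ring.lie_def]
        push_cast
        rw [(ι ℝ (L := g)).map_lie, Ring.lie_def] }
  have he : (Subalgebra.val S).comp (lift ℝ f) = AlgHom.id ℝ _ := by
    ext x
    show (Subalgebra.val S) ((lift ℝ f) ((ι ℝ) x)) = (ι ℝ) x
    rw [lift_ι_apply]
    rfl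
  have := DFunLike.congr_fun he v
  simp only [AlgHom.coe_comp, Function.comp_apply, AlgHom.coe_id, id_eq] at this
  rw [← this]
  exact ((lift ℝ f) v).2

lemma p_all (hq : IsCompl h.toSubmodule q) (u : UniversalEnvelopingAlgebra ℝ g) :
    PF h lam Q (fun _ => u) := by
  have hu : u ∈ Submodule.span ℝ
      ((Submonoid.closure (Set.range (⇑(ι ℝ : g →ₗ⁅ℝ⁆ UniversalEnvelopingAlgebra ℝ g))) :
        Submonoid (UniversalEnvelopingAlgebra ℝ g)) : Set (UniversalEnvelopingAlgebra ℝ g)) := by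
    rw [← Algebra.adjoin_eq_span]
    exact mem_adjoin_range_ι u
  induction hu using Submodule.span_induction with
  | mem v hv =>
    obtain ⟨l, hl, rfl⟩ := Submonoid.exists_list_of_mem_closure hv
    obtain ⟨xs, rfl⟩ := list_of_range hl
    exact pf_prodg h lam Q hq xs.length xs rfl
  | zero => exact pf_zero h lam Q
  | add x y _ _ hx hy => exact pf_add h lam Q hx hy
  | smul c x _ hx => exact pf_smul h lam Q c hx

end Final

theorem stmt14 (g : Type*) [LieRing g] [LieAlgebra ℝ g] [FiniteDimensional ℝ g]
    (h : LieSubalgebra ℝ g) (lam : h →ₗ[ℝ] ℝ)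
    (hlam : ∀ H₁ H₂ : h, lam ⁅H₁, H₂⁆ = 0)
    (q : Submodule ℝ g) (hq : IsCompl h.toSubmodule q)
    (p : ℕ) (Q : Module.Basis (Fin p) ℝ q)
    (u : UniversalEnvelopingAlgebra ℝ g) :
    ∃ (m : ℕ) (w : ℕ → UniversalEnvelopingAlgebra ℝ g),
      (∀ k, w k ∈ Mspan Q) ∧
      ∀ t : ℝ, u - (∑ k ∈ Finset.range (m + 1), t ^ k • w k) ∈ It h lam t := by
  obtain ⟨m, w, hw, hm⟩ := p_all h lam Q hq u
  exact ⟨m, w, hw, hm⟩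

end
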